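/- Given a matched pair of groupoids (G, H), the set G ⋈ H = {(x,h) : s_G(x) = r_H(h)} with multiplication (x,h)(y,g) = (x(h·y), h|_y g) (defined when r_G(y) = s_H(h)) and inverse (x,h)⁻¹ = (h⁻¹·x⁻¹, h⁻¹|_{x⁻¹}) is a groupoid. -/

import Mathlib

/-- An algebraic (discrete) groupoid with unit space `U`:
a set `G` with a (totalized) partial multiplication, inversion,
unit embedding, and source/range maps.  All axioms involving
multiplication are guarded by composability `src x = rng y`. -/
structure Gpd (G : Type*) (U : Type*) where
  mul : G → G → G
  inv : G → G
  unit : U → G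
  src : G → U
  rng : G → U
  src_unit : ∀ u, src (unit u) = u
  rng_unit : ∀ u, rng (unit u) = u
  mul_assoc : ∀ x y z, src x = rng y → src y = rng z →
    mul (mul x y) z = mul x (mul y z)
  src_mul : ∀ x y, src x = rng y → src (mul x y) = src y
  rng_mul : ∀ x y, src x = rng y → rng (mul x y) = rng x
  unit_mul : ∀ x, mul (unit (rng x)) x = x
  mul_unit : ∀ x, mul x (unit (src x)) = x
  inv_mul : ∀ x, mul (inv x) x = unit (src x)
  mul_inv : ∀ x, mul x (inv x) = unit (rng x)
  src_inv : ∀ x, src (inv x) = rng x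
  rng_inv : ∀ x, rng (inv x) = src x

/-- A matched pair of groupoids `(G, H)` with common unit space `U`:
an `H`-action `act h x` (meaningful when `src h = rng x`) and a
`G`-restriction `res h x`, satisfying axioms (ZS1)–(ZS9). -/
structure MatchedPair (G : Type*) (H : Type*) (U : Type*) where
  gd : Gpd G U
  hd : Gpd H U
  act : H → G → G
  res : H → G → H
  zs1 : ∀ h₁ h₂ x, hd.src h₁ = hd.rng h₂ → hd.src h₂ = gd.rng x →
    act (hd.mul h₁ h₂) x = act h₁ (act h₂ x)
  zs2 : ∀ h x, hd.src h = gd.rng x → gd.rng (act h x) = hd.rng h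
  zs3 : ∀ x, act (hd.unit (gd.rng x)) x = x
  zs4 : ∀ h x y, hd.src h = gd.rng x → gd.src x = gd.rng y →
    res h (gd.mul x y) = res (res h x) y
  zs5 : ∀ h x, hd.src h = gd.rng x → hd.src (res h x) = gd.src x
  zs6 : ∀ h, res h (gd.unit (hd.src h)) = h
  zs7 : ∀ h x, hd.src h = gd.rng x → gd.src (act h x) = hd.rng (res h x)
  zs8 : ∀ h x y, hd.src h = gd.rng x → gd.src x = gd.rng y →
    act h (gd.mul x y) = gd.mul (act h x) (act (res h x) y)
  zs9 : ∀ h₁ h₂ x, hd.src h₁ = hd.rng h₂ → hd.src h₂ = gd.rng x →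
    res (hd.mul h₁ h₂) x = hd.mul (res h₁ (act h₂ x)) (res h₂ x)

section ZSAux

variable {G H U : Type*}

private lemma Gpd.idem (gd : Gpd G U) (a : G) (hs : gd.src a = gd.rng a)
    (ha : gd.mul a a = a) : a = gd.unit (gd.src a) := by
  have h1 : gd.mul (gd.inv a) (gd.mul a a) = gd.mul (gd.inv a) a := by rw [ha]
  rw [← gd.mul_assoc _ _ _ (gd.src_inv a) hs, gd.inv_mul, hs, gd.unit_mul] at h1
  rw [hs]; exact h1

private lemma MatchedPair.act_unit (M : MatchedPair G H U) (h : H) :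
    M.act h (M.gd.unit (M.hd.src h)) = M.gd.unit (M.hd.rng h) := by
  have c1 : M.hd.src h = M.gd.rng (M.gd.unit (M.hd.src h)) := (M.gd.rng_unit _).symm
  have muu : M.gd.mul (M.gd.unit (M.hd.src h)) (M.gd.unit (M.hd.src h))
      = M.gd.unit (M.hd.src h) := by
    have := M.gd.unit_mul (M.gd.unit (M.hd.src h))
    rwa [M.gd.rng_unit] at this
  have key := M.zs8 h (M.gd.unit (M.hd.src h)) (M.gd.unit (M.hd.src h)) c1
    (by rw [M.gd.src_unit, M.gd.rng_unit])
  rw [muu, M.zs6 h] at key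
  have hrng : M.gd.rng (M.act h (M.gd.unit (M.hd.src h))) = M.hd.rng h := M.zs2 _ _ c1
  have hsrc : M.gd.src (M.act h (M.gd.unit (M.hd.src h))) = M.hd.rng h := by
    rw [M.zs7 _ _ c1, M.zs6 h]
  have := Gpd.idem M.gd _ (hsrc.trans hrng.symm) key.symm
  rwa [hsrc] at this

private lemma MatchedPair.res_unit (M : MatchedPair G H U) (x : G) :
    M.res (M.hd.unit (M.gd.rng x)) x = M.hd.unit (M.gd.src x) := by
  have c1 : M.hd.src (M.hd.unit (M.gd.rng x)) = M.gd.rng x := M.hd.src_unit _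
  have muu : M.hd.mul (M.hd.unit (M.gd.rng x)) (M.hd.unit (M.gd.rng x))
      = M.hd.unit (M.gd.rng x) := by
    have := M.hd.unit_mul (M.hd.unit (M.gd.rng x))
    rwa [M.hd.rng_unit] at this
  have key := M.zs9 (M.hd.unit (M.gd.rng x)) (M.hd.unit (M.gd.rng x)) x
    (by rw [M.hd.src_unit, M.hd.rng_unit]) c1
  rw [muu, M.zs3 x] at key
  have hsrc : M.hd.src (M.res (M.hd.unit (M.gd.rng x)) x) = M.gd.src x := M.zs5 _ _ c1
  have hrng : M.hd.rng (M.res (M.hd.unit (M.gd.rng x)) x) = M.gd.src x := by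
    rw [← M.zs7 _ _ c1, M.zs3 x]
  have := Gpd.idem M.hd _ (hsrc.trans hrng.symm) key.symm
  rwa [hsrc] at this

open Classical in
private noncomputable def zmul (M : MatchedPair G H U)
    (p q : {p : G × H // M.gd.src p.1 = M.hd.rng p.2}) :
    {p : G × H // M.gd.src p.1 = M.hd.rng p.2} :=
  if hc : M.gd.rng q.val.1 = M.hd.src p.val.2 then
    ⟨(M.gd.mul p.val.1 (M.act p.val.2 q.val.1),
      M.hd.mul (M.res p.val.2 q.val.1) q.val.2), by
      have h1 := M.gd.src_mul p.val.1 (M.act p.val.2 q.val.1)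
        (by rw [p.property, M.zs2 _ _ hc.symm])
      have h2 := M.hd.rng_mul (M.res p.val.2 q.val.1) q.val.2
        (by rw [M.zs5 _ _ hc.symm, q.property])
      rw [h1, h2, M.zs7 _ _ hc.symm]⟩
  else p

private noncomputable def zinv (M : MatchedPair G H U)
    (p : {p : G × H // M.gd.src p.1 = M.hd.rng p.2}) :
    {p : G × H // M.gd.src p.1 = M.hd.rng p.2} :=
  ⟨(M.act (M.hd.inv p.val.2) (M.gd.inv p.val.1),
    M.res (M.hd.inv p.val.2) (M.gd.inv p.val.1)),
   M.zs7 _ _ (by rw [M.hd.src_inv, M.gd.rng_inv, p.property])⟩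

private lemma zmul_val (M : MatchedPair G H U)
    (p q : {p : G × H // M.gd.src p.1 = M.hd.rng p.2})
    (hc : M.gd.rng q.val.1 = M.hd.src p.val.2) :
    (zmul M p q).val =
      (M.gd.mul p.val.1 (M.act p.val.2 q.val.1),
       M.hd.mul (M.res p.val.2 q.val.1) q.val.2) := by
  simp only [zmul]
  rw [dif_pos hc]

end ZSAux

/-- The Zappa–Szép product `G ⋈ H = {(x,h) : s_G(x) = r_H(h)}` of a matched pair,
with multiplication `(x,h)(y,g) = (x(h·y), h|_y g)` (defined when `r_G(y) = s_H(h)`)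
and inverse `(x,h)⁻¹ = (h⁻¹·x⁻¹, h⁻¹|_{x⁻¹})`, is a groupoid (over the common unit
space `U`): there is a groupoid structure on this set whose composability relation,
multiplication (on composable pairs) and inversion are given by these formulas. -/
theorem zs_product_is_groupoid {G H U : Type*} (M : MatchedPair G H U) :
    ∃ Z : Gpd {p : G × H // M.gd.src p.1 = M.hd.rng p.2} U,
      (∀ p q : {p : G × H // M.gd.src p.1 = M.hd.rng p.2},
        (Z.src p = Z.rng q ↔ M.gd.rng q.val.1 = M.hd.src p.val.2)) ∧
      (∀ p q : {p : G × H // M.gd.src p.1 = M.hd.rng p.2},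
        M.gd.rng q.val.1 = M.hd.src p.val.2 →
        (Z.mul p q).val =
          (M.gd.mul p.val.1 (M.act p.val.2 q.val.1),
           M.hd.mul (M.res p.val.2 q.val.1) q.val.2)) ∧
      (∀ p : {p : G × H // M.gd.src p.1 = M.hd.rng p.2},
        (Z.inv p).val =
          (M.act (M.hd.inv p.val.2) (M.gd.inv p.val.1),
           M.res (M.hd.inv p.val.2) (M.gd.inv p.val.1))) := by
  classical
  refine ⟨{
    mul := zmul M
    inv := zinv M
    unit := fun u => ⟨(M.gd.unit u, M.hd.unit u), by rw [M.gd.src_unit, M.hd.rng_unit]⟩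
    src := fun p => M.hd.src p.val.2
    rng := fun p => M.gd.rng p.val.1
    src_unit := fun u => M.hd.src_unit u
    rng_unit := fun u => M.gd.rng_unit u
    mul_assoc := ?_
    src_mul := ?_
    rng_mul := ?_
    unit_mul := ?_
    mul_unit := ?_
    inv_mul := ?_
    mul_inv := ?_
    src_inv := ?_
    rng_inv := ?_ }, fun p q => eq_comm, fun p q hc => zmul_val M p q hc, fun p => rfl⟩
  -- mul_assoc
  · intro p q r hpq hqr
    obtain ⟨⟨x, h⟩, hp⟩ := p
    obtain ⟨⟨y, g⟩, hq⟩ := q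
    obtain ⟨⟨z, k⟩, hr⟩ := r
    simp only at hpq hqr hp hq hr
    have sres_hy : M.hd.src (M.res h y) = M.hd.rng g := (M.zs5 h y hpq).trans hq
    have ract_gz : M.gd.rng (M.act g z) = M.hd.rng g := M.zs2 g z hqr
    have sy_ract : M.gd.src y = M.gd.rng (M.act g z) := hq.trans ract_gz.symm
    have e_pq : (zmul M ⟨(x, h), hp⟩ ⟨(y, g), hq⟩).val
        = (M.gd.mul x (M.act h y), M.hd.mul (M.res h y) g) :=
      zmul_val M ⟨(x, h), hp⟩ ⟨(y, g), hq⟩ hpq.symm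
    have e_qr : (zmul M ⟨(y, g), hq⟩ ⟨(z, k), hr⟩).val
        = (M.gd.mul y (M.act g z), M.hd.mul (M.res g z) k) :=
      zmul_val M ⟨(y, g), hq⟩ ⟨(z, k), hr⟩ hqr.symm
    have c_left : M.gd.rng z = M.hd.src (zmul M ⟨(x, h), hp⟩ ⟨(y, g), hq⟩).val.2 := by
      have h2 : (zmul M ⟨(x, h), hp⟩ ⟨(y, g), hq⟩).val.2 = M.hd.mul (M.res h y) g := by
        rw [e_pq]
      rw [h2, M.hd.src_mul _ _ sres_hy]
      exact hqr.symm
    have c_right : M.gd.rng (zmul M ⟨(y, g), hq⟩ ⟨(z, k), hr⟩).val.1 = M.hd.src h := by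
      have h2 : (zmul M ⟨(y, g), hq⟩ ⟨(z, k), hr⟩).val.1 = M.gd.mul y (M.act g z) := by
        rw [e_qr]
      rw [h2, M.gd.rng_mul y (M.act g z) (by rw [hq, ract_gz])]
      exact hpq.symm
    apply Subtype.ext
    rw [zmul_val M (zmul M ⟨(x, h), hp⟩ ⟨(y, g), hq⟩) ⟨(z, k), hr⟩ c_left,
      zmul_val M ⟨(x, h), hp⟩ (zmul M ⟨(y, g), hq⟩ ⟨(z, k), hr⟩) c_right, e_pq, e_qr]
    dsimp only
    simp only [Prod.mk.injEq]
    constructor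
    · rw [M.zs1 _ _ _ sres_hy hqr,
        M.gd.mul_assoc x (M.act h y) (M.act (M.res h y) (M.act g z))
          (by rw [hp, M.zs2 h y hpq])
          (by rw [M.zs7 h y hpq,
                M.zs2 (M.res h y) (M.act g z) (by rw [M.zs5 h y hpq]; exact sy_ract)]),
        ← M.zs8 h y (M.act g z) hpq sy_ract]
    · rw [M.zs9 _ _ _ sres_hy hqr, M.zs4 h y (M.act g z) hpq sy_ract,
        M.hd.mul_assoc _ _ _
          (by rw [M.zs5 (M.res h y) (M.act g z) (by rw [M.zs5 h y hpq]; exact sy_ract),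
                M.zs7 g z hqr])
          (by rw [M.zs5 g z hqr, hr])]
  -- src_mul
  · intro p q hc
    show M.hd.src (zmul M p q).val.2 = M.hd.src q.val.2
    have h2 : (zmul M p q).val.2 = M.hd.mul (M.res p.val.2 q.val.1) q.val.2 := by
      rw [zmul_val M p q hc.symm]
    rw [h2]
    exact M.hd.src_mul _ _ (by rw [M.zs5 _ _ hc, q.property])
  -- rng_mul
  · intro p q hc
    show M.gd.rng (zmul M p q).val.1 = M.gd.rng p.val.1
    have h1 : (zmul M p q).val.1 = M.gd.mul p.val.1 (M.act p.val.2 q.val.1) := by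
      rw [zmul_val M p q hc.symm]
    rw [h1]
    exact M.gd.rng_mul _ _ (by rw [p.property, M.zs2 _ _ hc])
  -- unit_mul
  · intro p
    obtain ⟨⟨x, h⟩, hp⟩ := p
    simp only at hp
    apply Subtype.ext
    rw [zmul_val M _ _ (M.hd.src_unit _).symm]
    dsimp only
    simp only [Prod.mk.injEq]
    constructor
    · rw [M.zs3 x, M.gd.unit_mul x]
    · rw [MatchedPair.res_unit M x, hp, M.hd.unit_mul h]
  -- mul_unit
  · intro p
    obtain ⟨⟨x, h⟩, hp⟩ := p
    simp only at hp
    apply Subtype.ext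
    rw [zmul_val M _ _ (M.gd.rng_unit _)]
    dsimp only
    simp only [Prod.mk.injEq]
    constructor
    · rw [MatchedPair.act_unit M h, ← hp, M.gd.mul_unit x]
    · rw [M.zs6 h, M.hd.mul_unit h]
  -- inv_mul
  · intro p
    obtain ⟨⟨x, h⟩, hp⟩ := p
    simp only at hp
    have hinv : M.hd.src (M.hd.inv h) = M.gd.rng (M.gd.inv x) := by
      rw [M.hd.src_inv, M.gd.rng_inv, hp]
    have c1 : M.gd.rng x = M.hd.src (M.res (M.hd.inv h) (M.gd.inv x)) := by
      rw [M.zs5 _ _ hinv, M.gd.src_inv]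
    have mxx : M.gd.mul (M.gd.inv x) x = M.gd.unit (M.gd.src x) := M.gd.inv_mul x
    have hsx : M.gd.src x = M.hd.src (M.hd.inv h) := by rw [M.hd.src_inv, hp]
    apply Subtype.ext
    rw [zmul_val M _ _ c1]
    dsimp only [zinv]
    simp only [Prod.mk.injEq]
    constructor
    · rw [← M.zs8 (M.hd.inv h) (M.gd.inv x) x hinv (M.gd.src_inv x), mxx, hsx,
        MatchedPair.act_unit M (M.hd.inv h), M.hd.rng_inv]
    · rw [← M.zs4 (M.hd.inv h) (M.gd.inv x) x hinv (M.gd.src_inv x), mxx, hsx,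
        M.zs6 (M.hd.inv h), M.hd.inv_mul h]
  -- mul_inv
  · intro p
    obtain ⟨⟨x, h⟩, hp⟩ := p
    simp only at hp
    have hinv : M.hd.src (M.hd.inv h) = M.gd.rng (M.gd.inv x) := by
      rw [M.hd.src_inv, M.gd.rng_inv, hp]
    have hh : M.hd.src h = M.hd.rng (M.hd.inv h) := (M.hd.rng_inv h).symm
    have c1 : M.gd.rng (zinv M ⟨(x, h), hp⟩).val.1 = M.hd.src h := by
      show M.gd.rng (M.act (M.hd.inv h) (M.gd.inv x)) = M.hd.src h
      rw [M.zs2 _ _ hinv, M.hd.rng_inv]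
    have hrh : M.hd.rng h = M.gd.rng (M.gd.inv x) := by rw [M.gd.rng_inv, hp]
    apply Subtype.ext
    rw [zmul_val M _ _ c1]
    dsimp only [zinv]
    simp only [Prod.mk.injEq]
    constructor
    · rw [← M.zs1 h (M.hd.inv h) (M.gd.inv x) hh hinv, M.hd.mul_inv h, hrh,
        M.zs3 (M.gd.inv x), M.gd.mul_inv x]
    · rw [← M.zs9 h (M.hd.inv h) (M.gd.inv x) hh hinv, M.hd.mul_inv h, hrh,
        MatchedPair.res_unit M (M.gd.inv x), M.gd.src_inv]
  -- src_inv
  · intro p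
    show M.hd.src (M.res (M.hd.inv p.val.2) (M.gd.inv p.val.1)) = M.gd.rng p.val.1
    rw [M.zs5 _ _ (by rw [M.hd.src_inv, M.gd.rng_inv, p.property]), M.gd.src_inv]
  -- rng_inv
  · intro p
    show M.gd.rng (M.act (M.hd.inv p.val.2) (M.gd.inv p.val.1)) = M.hd.src p.val.2
    rw [M.zs2 _ _ (by rw [M.hd.src_inv, M.gd.rng_inv, p.property]), M.hd.rng_inv]
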